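/- Let M be a universal n-linear order and g ∈ Aut(M). (a) If g a <_i a for every a ∈ M and every i ∈ {1, …, n}, then g moves almost R-maximally: for every finite X ⊆ M and every tuple b_1, …, b_l ∈ M with no entry in X, there exist a_1, …, a_l ∈ M realizing the same quantifier-free type over X as b_1, …, b_l (for every order index k and all s, t: a_s <_k a_t iff b_s <_k b_t, and for every x ∈ X: a_s <_k x iff b_s <_k x, and x <_k a_s iff x <_k b_s; in particular no a_s lies in X) such that (a_1, …, a_l) is independent from (g a_1, …, g a_l) over X, meaning: for every order index k and all s, t, if a_s <_k g a_t and g a_t ∉ X, then there exists x ∈ X with a_s <_k x and x <_k g a_t. (b) Symmetrically, if a <_i g a for every a ∈ M and every i, then g moves almost L-maximally: for every such X and tuple b_1, …, b_l there is a tuple a_1, …, a_l realizing the same quantifier-free type over X such that (g a_1, …, g a_l) is independent from (a_1, …, a_l) over X, meaning: for every k and all s, t, if g a_s <_k a_t and g a_s ∉ X, then there exists x ∈ X with g a_s <_k x and x <_k a_t. -/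

import Mathlib

/-- A set `M` equipped with `n` linear orders `<_1, …, <_n`. -/
structure NLinear (n : ℕ) (M : Type*) where
  lt : Fin n → M → M → Prop
  irrefl : ∀ i a, ¬ lt i a a
  trans : ∀ i a b c, lt i a b → lt i b c → lt i a c
  total : ∀ i a b, lt i a b ∨ a = b ∨ lt i b a

/-- `M` with its `n` linear orders is a universal `n`-linear order: it is countably
infinite and has the one-point extension property. -/
structure IsUniversalNLinear (n : ℕ) (M : Type*) (L : NLinear n M) : Prop where
  countable : Countable M
  infinite : Infinite M
  extension : ∀ (A : Finset M) (D : Fin n → Set M),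
    (∀ i, D i ⊆ ↑A) →
    (∀ i, ∀ a ∈ A, ∀ b ∈ A, L.lt i a b → b ∈ D i → a ∈ D i) →
    ∃ x, x ∉ A ∧ ∀ i, ∀ a ∈ A, (L.lt i a x ↔ a ∈ D i)

/-- The automorphism group of an `n`-linearly ordered set, as a subgroup of `Equiv.Perm M`. -/
def NLinear.aut {n : ℕ} {M : Type*} (L : NLinear n M) : Subgroup (Equiv.Perm M) where
  carrier := {g | ∀ i a b, L.lt i a b ↔ L.lt i (g a) (g b)}
  one_mem' := fun _ _ _ => Iff.rfl
  mul_mem' := by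
    intro g h hg hh i a b
    exact (hh i a b).trans (hg i (h a) (h b))
  inv_mem' := by
    intro g hg i a b
    simpa using (hg i (g⁻¹ a) (g⁻¹ b)).symm

/-- `f` has a single `+`-orbital with respect to `<_m`. -/
def NLinear.SinglePlus {n : ℕ} {M : Type*} (L : NLinear n M) (m : Fin n)
    (f : Equiv.Perm M) : Prop :=
  ∃ a : M, L.lt m a (f a) ∧ (∀ x : M, ∃ k : ℤ, L.lt m x ((f ^ k) a)) ∧
    (∀ x : M, ∃ k : ℤ, L.lt m ((f ^ k) a) x)

/-- `f` has a single `−`-orbital with respect to `<_m`. -/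
def NLinear.SingleMinus {n : ℕ} {M : Type*} (L : NLinear n M) (m : Fin n)
    (f : Equiv.Perm M) : Prop :=
  ∃ a : M, L.lt m (f a) a ∧ (∀ x : M, ∃ k : ℤ, L.lt m x ((f ^ k) a)) ∧
    (∀ x : M, ∃ k : ℤ, L.lt m ((f ^ k) a) x)

/-- `f` has a `+`-orbital unbounded above with respect to `<_m`. -/
def NLinear.PlusUnbAbove {n : ℕ} {M : Type*} (L : NLinear n M) (m : Fin n)
    (f : Equiv.Perm M) : Prop :=
  ∃ a : M, L.lt m a (f a) ∧ ∀ x : M, ∃ k : ℤ, L.lt m x ((f ^ k) a)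

/-- `f` has a `−`-orbital unbounded below with respect to `<_m`. -/
def NLinear.MinusUnbBelow {n : ℕ} {M : Type*} (L : NLinear n M) (m : Fin n)
    (f : Equiv.Perm M) : Prop :=
  ∃ b : M, L.lt m (f b) b ∧ ∀ x : M, ∃ k : ℤ, L.lt m ((f ^ k) b) x

namespace Stmt3

attribute [local instance] Classical.propDecidable

variable {n : ℕ} {M : Type*}

theorem nasymm (L : NLinear n M) {i : Fin n} {a b : M} (h : L.lt i a b) : ¬ L.lt i b a :=
  fun h' => L.irrefl i a (L.trans i a b a h h')

theorem nlt_of (L : NLinear n M) {i : Fin n} {a b : M} (hne : b ≠ a) (h : ¬ L.lt i b a) :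
    L.lt i a b := by
  rcases L.total i a b with h' | h' | h'
  · exact h'
  · exact absurd h'.symm hne
  · exact absurd h' h

theorem exists_sandwich (L : NLinear n M) (hL : IsUniversalNLinear n M L) (A : Finset M)
    (S T : Fin n → Finset M) (hS : ∀ i, S i ⊆ A) (hT : ∀ i, T i ⊆ A)
    (hST : ∀ i, ∀ a ∈ S i, ∀ c ∈ T i, L.lt i a c) :
    ∃ x, x ∉ A ∧ ∀ i, (∀ a ∈ S i, L.lt i a x) ∧ (∀ c ∈ T i, L.lt i x c) := by
  have h1 : ∀ i, {y | y ∈ (A : Set M) ∧ ∃ a ∈ S i, y = a ∨ L.lt i y a} ⊆ (A : Set M) :=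
    fun i y hy => hy.1
  have h2 : ∀ i, ∀ a ∈ A, ∀ c ∈ A, L.lt i a c →
      c ∈ {y | y ∈ (A : Set M) ∧ ∃ a ∈ S i, y = a ∨ L.lt i y a} →
      a ∈ {y | y ∈ (A : Set M) ∧ ∃ a ∈ S i, y = a ∨ L.lt i y a} := by
    intro i a ha c hc hlt hcD
    obtain ⟨-, a', ha', h'⟩ := hcD
    refine ⟨ha, a', ha', Or.inr ?_⟩
    rcases h' with rfl | h'
    · exact hlt
    · exact L.trans _ _ _ _ hlt h'
  obtain ⟨x, hxA, hx⟩ := hL.extension A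
    (fun i => {y | y ∈ (A : Set M) ∧ ∃ a ∈ S i, y = a ∨ L.lt i y a}) h1 h2
  refine ⟨x, hxA, fun i => ⟨?_, ?_⟩⟩
  · intro a ha
    exact (hx i a (hS i ha)).mpr ⟨hS i ha, a, ha, Or.inl rfl⟩
  · intro c hc
    have hcA := hT i hc
    have hnot : ¬ L.lt i c x := by
      intro h
      obtain ⟨-, a, haS, h'⟩ := (hx i c hcA).mp h
      rcases h' with rfl | h'
      · exact L.irrefl i c (hST i c haS c hc)
      · exact nasymm L h' (hST i a haS c hc)
    have hne : c ≠ x := fun h => hxA (h ▸ hcA)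
    exact nlt_of L hne hnot

theorem sandwich_one (L : NLinear n M) (hL : IsUniversalNLinear n M L) (k : Fin n)
    (A Sk Tk : Finset M) (hS : Sk ⊆ A) (hT : Tk ⊆ A)
    (h : ∀ a ∈ Sk, ∀ c ∈ Tk, L.lt k a c) :
    ∃ x, x ∉ A ∧ (∀ a ∈ Sk, L.lt k a x) ∧ (∀ c ∈ Tk, L.lt k x c) := by
  obtain ⟨x, hxA, hx⟩ := exists_sandwich L hL A (fun i => if i = k then Sk else ∅)
      (fun i => if i = k then Tk else ∅)
      (fun i => by split <;> simp [hS])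
      (fun i => by split <;> simp [hT])
      (fun i => by
        split
        · next heq => subst heq; exact h
        · intro a ha; simp at ha)
  refine ⟨x, hxA, ?_, ?_⟩
  · have := (hx k).1; simpa using this
  · have := (hx k).2; simpa using this

section Setup

variable (L : NLinear n M) (X : Finset M)

/-- The lower cut of `y` in `X` with respect to `<_k`. -/
noncomputable def cutP (k : Fin n) (y : M) : Finset M := X.filter fun x => L.lt k x y

theorem mem_cutP {k : Fin n} {x y : M} : x ∈ cutP L X k y ↔ x ∈ X ∧ L.lt k x y :=
  Finset.mem_filter

theorem cutP_subset {k : Fin n} {y : M} : cutP L X k y ⊆ X := Finset.filter_subset _ _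

theorem cutP_mono {k : Fin n} {y z : M} (h : L.lt k y z) : cutP L X k y ⊆ cutP L X k z := by
  intro x hx
  rw [mem_cutP] at *
  exact ⟨hx.1, L.trans _ _ _ _ hx.2 h⟩

theorem cutP_comparable (k : Fin n) (y z : M) :
    cutP L X k y ⊆ cutP L X k z ∨ cutP L X k z ⊆ cutP L X k y := by
  by_contra hcon
  push_neg at hcon
  obtain ⟨x₁, hx₁, hx₁'⟩ := Finset.not_subset.mp hcon.1
  obtain ⟨x₂, hx₂, hx₂'⟩ := Finset.not_subset.mp hcon.2
  rw [mem_cutP] at hx₁ hx₂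
  rcases L.total k x₁ x₂ with h | h | h
  · exact hx₁' (by rw [mem_cutP]; exact ⟨hx₁.1, L.trans _ _ _ _ h hx₂.2⟩)
  · subst h; exact hx₁' (by rw [mem_cutP]; exact hx₂)
  · exact hx₂' (by rw [mem_cutP]; exact ⟨hx₂.1, L.trans _ _ _ _ h hx₁.2⟩)

theorem cutP_eq_of_card (k : Fin n) {y z : M}
    (h : (cutP L X k y).card = (cutP L X k z).card) : cutP L X k y = cutP L X k z := by
  rcases cutP_comparable L X k y z with h' | h'
  · exact Finset.eq_of_subset_of_card_le h' h.ge
  · exact (Finset.eq_of_subset_of_card_le h' h.le).symm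

/-- `y` lies in the gap of `X` (w.r.t. `<_k`) whose lower cut is `C`. -/
def InGap (k : Fin n) (C : Finset M) (y : M) : Prop :=
  (∀ x ∈ C, L.lt k x y) ∧ ∀ x ∈ X, x ∉ C → L.lt k y x

theorem InGap.cutP_eq {k : Fin n} {C : Finset M} {y : M} (hC : C ⊆ X)
    (h : InGap L X k C y) : cutP L X k y = C := by
  ext x
  rw [mem_cutP]
  constructor
  · rintro ⟨hxX, hxy⟩
    by_contra hxC
    exact nasymm L hxy (h.2 x hxX hxC)
  · intro hxC
    exact ⟨hC hxC, h.1 x hxC⟩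

theorem InGap.not_mem {k : Fin n} {C : Finset M} {y : M} (h : InGap L X k C y) : y ∉ X := by
  intro hy
  by_cases hc : y ∈ C
  · exact L.irrefl k y (h.1 y hc)
  · exact L.irrefl k y (h.2 y hy hc)

end Setup


section Build

variable (L : NLinear n M) (X : Finset M) (G : Equiv.Perm M) {l : ℕ} (b : Fin l → M)

/-- The bundle of properties of the reference points for gap of `b s` at stage `j`. -/
def Good (k : Fin n) (βr αr : Fin l → M) (j : ℕ) (s : Fin l) : Prop :=
  InGap L X k (cutP L X k (b s)) (βr s) ∧
  InGap L X k (cutP L X k (b s)) (αr s) ∧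
  L.lt k (αr s) (βr s) ∧
  L.lt k (G (βr s)) (αr s) ∧
  G (βr s) ∉ X ∧
  cutP L X k (G (αr s)) = cutP L X k (G (βr s)) ∧
  ∀ t : Fin l, X.card - (cutP L X k (b t)).card < j →
    cutP L X k (G (βr s)) = cutP L X k (b t) → L.lt k (G (βr s)) (αr t)

theorem exists_refs (hL : IsUniversalNLinear n M L)
    (hmono : ∀ (i : Fin n) (a c : M), L.lt i a c ↔ L.lt i (G a) (G c))
    (hdown : ∀ (a : M) (i : Fin n), L.lt i (G a) a)
    (hb : ∀ s, b s ∉ X) (k : Fin n) :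
    ∀ j : ℕ, ∃ βr αr : Fin l → M,
      (∀ s t : Fin l, cutP L X k (b s) = cutP L X k (b t) → βr s = βr t ∧ αr s = αr t) ∧
      ∀ s : Fin l, X.card - (cutP L X k (b s)).card < j → Good L X G b k βr αr j s := by
  intro j
  induction j with
  | zero =>
    haveI := hL.infinite
    obtain ⟨c⟩ : Nonempty M := inferInstance
    exact ⟨fun _ => c, fun _ => c, fun _ _ _ => ⟨rfl, rfl⟩,
      fun s hs => absurd hs (Nat.not_lt_zero _)⟩
  | succ j ih =>
    obtain ⟨βr, αr, hcomp, hgood⟩ := ih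
    by_cases hex : ∃ s₀ : Fin l, X.card - (cutP L X k (b s₀)).card = j
    · obtain ⟨s₀, hs₀⟩ := hex
      have hcard_le : ∀ y : M, (cutP L X k y).card ≤ X.card :=
        fun y => Finset.card_le_card (cutP_subset L X)
      -- any t assigned at stage j+1 has either the new cut or was assigned before
      have hstage : ∀ t : Fin l, X.card - (cutP L X k (b t)).card < j + 1 →
          cutP L X k (b t) = cutP L X k (b s₀) ∨ X.card - (cutP L X k (b t)).card < j := by
        intro t ht
        by_cases h : X.card - (cutP L X k (b t)).card < j
        · exact Or.inr h
        · have h1 := hcard_le (b t); have h2 := hcard_le (b s₀)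
          exact Or.inl (cutP_eq_of_card L X k (by omega))
      have hstage2 : ∀ t : Fin l, X.card - (cutP L X k (b t)).card < j →
          (cutP L X k (b s₀)).card < (cutP L X k (b t)).card := by
        intro t ht
        have h1 := hcard_le (b t); have h2 := hcard_le (b s₀)
        omega
      -- Land : images of previously assigned β's landing in the new gap
      set Land : Finset M :=
        (Finset.univ.filter (fun t : Fin l =>
          X.card - (cutP L X k (b t)).card < j ∧
          cutP L X k (G (βr t)) = cutP L X k (b s₀))).image (fun t => G (βr t)) with hLandDef
      have hLandMem : ∀ w, w ∈ Land → cutP L X k w = cutP L X k (b s₀) ∧ w ∉ X := by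
        intro w hw
        rw [hLandDef, Finset.mem_image] at hw
        obtain ⟨t, ht, rfl⟩ := hw
        rw [Finset.mem_filter] at ht
        exact ⟨ht.2.2, (hgood t ht.2.1).2.2.2.2.1⟩
      have hLandMem' : ∀ t : Fin l, X.card - (cutP L X k (b t)).card < j →
          cutP L X k (G (βr t)) = cutP L X k (b s₀) → G (βr t) ∈ Land := by
        intro t ht hc
        rw [hLandDef, Finset.mem_image]
        exact ⟨t, Finset.mem_filter.mpr ⟨Finset.mem_univ t, ht, hc⟩, rfl⟩
      -- the ordering fact used for choosing βn
      have hordβ : ∀ u ∈ cutP L X k (b s₀) ∪ Land, ∀ v ∈ X \ cutP L X k (b s₀), L.lt k u v := by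
        intro u hu v hv
        rw [Finset.mem_sdiff] at hv
        rcases Finset.mem_union.mp hu with huC | huL
        · -- via b s₀
          have hub : L.lt k u (b s₀) := ((mem_cutP L X).mp huC).2
          have hbv : L.lt k (b s₀) v := by
            refine nlt_of L (fun h => hb s₀ (h ▸ hv.1)) (fun h => hv.2 ?_)
            exact (mem_cutP L X).mpr ⟨hv.1, h⟩
          exact L.trans _ _ _ _ hub hbv
        · obtain ⟨hwc, hwX⟩ := hLandMem u huL
          refine nlt_of L (fun h => hwX (h ▸ hv.1)) (fun h => hv.2 ?_)
          rw [← hwc]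
          exact (mem_cutP L X).mpr ⟨hv.1, h⟩
      obtain ⟨βn, hβnA, hβn₁, hβn₂⟩ :=
        sandwich_one L hL k ((X ∪ Land) ∪ X.image (fun x => G.symm x))
          (cutP L X k (b s₀) ∪ Land) (X \ cutP L X k (b s₀))
          (by
            intro u hu
            rcases Finset.mem_union.mp hu with h | h
            · exact Finset.mem_union_left _ (Finset.mem_union_left _ (cutP_subset L X h))
            · exact Finset.mem_union_left _ (Finset.mem_union_right _ h))
          (by
            intro v hv
            exact Finset.mem_union_left _
              (Finset.mem_union_left _ (Finset.mem_sdiff.mp hv).1))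
          hordβ
      have hβgap : InGap L X k (cutP L X k (b s₀)) βn :=
        ⟨fun x hx => hβn₁ x (Finset.mem_union_left _ hx),
         fun x hxX hxC => hβn₂ x (Finset.mem_sdiff.mpr ⟨hxX, hxC⟩)⟩
      have hβX : G βn ∉ X := by
        intro hx
        exact hβnA (Finset.mem_union_right _
          (Finset.mem_image.mpr ⟨G βn, hx, Equiv.symm_apply_apply G βn⟩))
      have hβC : cutP L X k βn = cutP L X k (b s₀) :=
        InGap.cutP_eq L X (cutP_subset L X) hβgap
      have hβland : ∀ w ∈ Land, L.lt k w βn :=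
        fun w hw => hβn₁ w (Finset.mem_union_right _ hw)
      -- choosing αn
      have hSβn : ∀ u ∈ (cutP L X k (b s₀) ∪ Land) ∪
          insert (G βn) ((cutP L X k (G βn)).image (fun x => G.symm x)), L.lt k u βn := by
        intro u hu
        rcases Finset.mem_union.mp hu with h | h
        · rcases Finset.mem_union.mp h with h' | h'
          · exact hβn₁ u (Finset.mem_union_left _ h')
          · exact hβland u h'
        · rcases Finset.mem_insert.mp h with rfl | h'
          · exact hdown βn k
          · obtain ⟨x, hx, rfl⟩ := Finset.mem_image.mp h'
            have hxlt : L.lt k x (G βn) := ((mem_cutP L X).mp hx).2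
            rw [hmono k (G.symm x) βn, Equiv.apply_symm_apply]
            exact hxlt
      have hordα : ∀ u ∈ (cutP L X k (b s₀) ∪ Land) ∪
          insert (G βn) ((cutP L X k (G βn)).image (fun x => G.symm x)),
          ∀ v ∈ insert βn (X \ cutP L X k (b s₀)), L.lt k u v := by
        intro u hu v hv
        rcases Finset.mem_insert.mp hv with rfl | hv'
        · exact hSβn u hu
        · exact L.trans _ _ _ _ (hSβn u hu) (hβn₂ v hv')
      obtain ⟨αn, hαnA, hαn₁, hαn₂⟩ :=
        sandwich_one L hL k
          (((cutP L X k (b s₀) ∪ Land) ∪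
            insert (G βn) ((cutP L X k (G βn)).image (fun x => G.symm x))) ∪
            insert βn (X \ cutP L X k (b s₀)))
          ((cutP L X k (b s₀) ∪ Land) ∪
            insert (G βn) ((cutP L X k (G βn)).image (fun x => G.symm x)))
          (insert βn (X \ cutP L X k (b s₀)))
          (Finset.subset_union_left) (Finset.subset_union_right) hordα
      have hαgap : InGap L X k (cutP L X k (b s₀)) αn :=
        ⟨fun x hx => hαn₁ x (Finset.mem_union_left _ (Finset.mem_union_left _ hx)),
         fun x hxX hxC => hαn₂ x (Finset.mem_insert_of_mem (Finset.mem_sdiff.mpr ⟨hxX, hxC⟩))⟩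
      have hαβ : L.lt k αn βn := hαn₂ βn (Finset.mem_insert_self _ _)
      have hGβα : L.lt k (G βn) αn :=
        hαn₁ (G βn) (Finset.mem_union_right _ (Finset.mem_insert_self _ _))
      have hLandα : ∀ w ∈ Land, L.lt k w αn :=
        fun w hw => hαn₁ w (Finset.mem_union_left _ (Finset.mem_union_right _ hw))
      have hcuteq : cutP L X k (G αn) = cutP L X k (G βn) := by
        apply Finset.Subset.antisymm
        · exact cutP_mono L X ((hmono k αn βn).mp hαβ)
        · intro x hx
          rw [mem_cutP] at hx ⊢
          refine ⟨hx.1, ?_⟩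
          have : L.lt k (G.symm x) αn := hαn₁ (G.symm x)
            (Finset.mem_union_right _ (Finset.mem_insert_of_mem
              (Finset.mem_image.mpr ⟨x, (mem_cutP L X).mpr hx, rfl⟩)))
          have := (hmono k (G.symm x) αn).mp this
          rwa [Equiv.apply_symm_apply] at this
      have hGβnC : cutP L X k (G βn) ⊆ cutP L X k (b s₀) := by
        rw [← hβC]
        exact cutP_mono L X (hdown βn k)
      -- the updated reference functions
      refine ⟨fun t => if cutP L X k (b t) = cutP L X k (b s₀) then βn else βr t,
              fun t => if cutP L X k (b t) = cutP L X k (b s₀) then αn else αr t, ?_, ?_⟩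
      · intro s t h
        dsimp only
        rw [h]
        by_cases hc : cutP L X k (b t) = cutP L X k (b s₀)
        · simp [hc]
        · simp only [if_neg hc]; exact hcomp s t h
      · intro s hs
        by_cases hsC : cutP L X k (b s) = cutP L X k (b s₀)
        · -- s belongs to the new gap
          refine ⟨?_, ?_, ?_, ?_, ?_, ?_, ?_⟩
          · simp only [hsC, eq_self_iff_true, if_true]; exact hβgap
          · simp only [hsC, eq_self_iff_true, if_true]; exact hαgap
          · simp only [hsC, eq_self_iff_true, if_true]; exact hαβ
          · simp only [hsC, eq_self_iff_true, if_true]; exact hGβα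
          · simp only [hsC, eq_self_iff_true, if_true]; exact hβX
          · simp only [hsC, eq_self_iff_true, if_true]; exact hcuteq
          · intro t ht hcut
            simp only [hsC, eq_self_iff_true, if_true] at hcut ⊢
            by_cases htC : cutP L X k (b t) = cutP L X k (b s₀)
            · rw [if_pos htC]; exact hGβα
            · exfalso
              have ht' : X.card - (cutP L X k (b t)).card < j := by
                rcases hstage t ht with h | h
                · exact absurd h htC
                · exact h
              have h1 : (cutP L X k (G βn)).card ≤ (cutP L X k (b s₀)).card :=
                Finset.card_le_card hGβnC
              have h2 := hstage2 t ht'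
              rw [hcut] at h1
              omega
        · -- s was assigned at an earlier stage
          have hs' : X.card - (cutP L X k (b s)).card < j := by
            rcases hstage s hs with h | h
            · exact absurd h hsC
            · exact h
          obtain ⟨h1, h2, h3, h4, h5, h6, h7⟩ := hgood s hs'
          refine ⟨?_, ?_, ?_, ?_, ?_, ?_, ?_⟩
          · simp only [if_neg hsC]; exact h1
          · simp only [if_neg hsC]; exact h2
          · simp only [if_neg hsC]; exact h3
          · simp only [if_neg hsC]; exact h4
          · simp only [if_neg hsC]; exact h5
          · simp only [if_neg hsC]; exact h6
          · intro t ht hcut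
            simp only [if_neg hsC] at hcut ⊢
            by_cases htC : cutP L X k (b t) = cutP L X k (b s₀)
            · rw [if_pos htC]
              have : G (βr s) ∈ Land := hLandMem' s hs' (by rw [hcut, htC])
              exact hLandα _ this
            · rw [if_neg htC]
              have ht' : X.card - (cutP L X k (b t)).card < j := by
                rcases hstage t ht with h | h
                · exact absurd h htC
                · exact h
              exact h7 t ht' hcut
    · refine ⟨βr, αr, hcomp, fun s hs => ?_⟩
      have hs' : X.card - (cutP L X k (b s)).card < j := by
        by_cases h : X.card - (cutP L X k (b s)).card < j
        · exact h
        · exact absurd ⟨s, by omega⟩ hex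
      obtain ⟨h1, h2, h3, h4, h5, h6, h7⟩ := hgood s hs'
      refine ⟨h1, h2, h3, h4, h5, h6, fun t ht hc => ?_⟩
      by_cases h : X.card - (cutP L X k (b t)).card < j
      · exact h7 t h hc
      · exact absurd ⟨t, by omega⟩ hex

theorem exists_pts (hL : IsUniversalNLinear n M L)
    (Beta Alpha : Fin n → Fin l → M)
    (hcomp : ∀ (k : Fin n) (s t : Fin l), cutP L X k (b s) = cutP L X k (b t) →
      Beta k s = Beta k t ∧ Alpha k s = Alpha k t)
    (hβ : ∀ (k : Fin n) (s : Fin l), InGap L X k (cutP L X k (b s)) (Beta k s))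
    (hα : ∀ (k : Fin n) (s : Fin l), InGap L X k (cutP L X k (b s)) (Alpha k s))
    (hαβ : ∀ (k : Fin n) (s : Fin l), L.lt k (Alpha k s) (Beta k s)) :
    ∀ j : ℕ, ∃ a : Fin l → M,
      ∀ s : Fin l, s.val < j →
        (∀ k, L.lt k (Alpha k s) (a s) ∧ L.lt k (a s) (Beta k s)) ∧
        ∀ t : Fin l, t.val < j →
          (b s = b t → a s = a t) ∧ ∀ k, L.lt k (b s) (b t) → L.lt k (a s) (a t) := by
  intro j
  induction j with
  | zero =>
    haveI := hL.infinite
    obtain ⟨c⟩ : Nonempty M := inferInstance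
    exact ⟨fun _ => c, fun s hs => absurd hs (Nat.not_lt_zero _)⟩
  | succ j ih =>
    obtain ⟨a, ha⟩ := ih
    by_cases hjl : j < l
    swap
    · refine ⟨a, fun s hs => ?_⟩
      have hsl : s.val < j := by have := s.isLt; omega
      obtain ⟨h1, h2⟩ := ha s hsl
      exact ⟨h1, fun t ht => h2 t (by have := t.isLt; omega)⟩
    · -- the new index is s₀ := ⟨j, hjl⟩
      have hfin : ∀ s : Fin l, s.val < j + 1 → s = (⟨j, hjl⟩ : Fin l) ∨ s.val < j := by
        intro s hs
        by_cases h : s.val < j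
        · exact Or.inr h
        · exact Or.inl (Fin.ext (by simp; omega))
      by_cases hdup : ∃ r : Fin l, r.val < j ∧ b r = b (⟨j, hjl⟩ : Fin l)
      · obtain ⟨r₀, hr₀j, hr₀b⟩ := hdup
        refine ⟨Function.update a (⟨j, hjl⟩ : Fin l) (a r₀), fun s hs => ?_⟩
        have hval : Function.update a (⟨j, hjl⟩ : Fin l) (a r₀) (⟨j, hjl⟩ : Fin l) = a r₀ :=
          Function.update_self _ _ _
        have hvalne : ∀ t : Fin l, t.val < j →
            Function.update a (⟨j, hjl⟩ : Fin l) (a r₀) t = a t := by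
          intro t htj
          refine Function.update_of_ne (fun h => ?_) _ _
          rw [h] at htj; simp at htj
        rcases hfin s hs with rfl | hsj
        · constructor
          · intro k
            rw [hval]
            have hcq : cutP L X k (b r₀) = cutP L X k (b (⟨j, hjl⟩ : Fin l)) := by
              rw [hr₀b]
            obtain ⟨hB, hA⟩ := hcomp k r₀ _ hcq
            rw [← hB, ← hA]
            exact (ha r₀ hr₀j).1 k
          · intro t ht
            rcases hfin t ht with rfl | htj
            · exact ⟨fun _ => rfl, fun k h => absurd h (L.irrefl _ _)⟩
            · rw [hval, hvalne t htj]
              constructor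
              · intro hbe
                exact (ha r₀ hr₀j).2 t htj |>.1 (hr₀b.trans hbe)
              · intro k h
                refine (ha r₀ hr₀j).2 t htj |>.2 k ?_
                rw [hr₀b]; exact h
        · rw [hvalne s hsj]
          constructor
          · intro k
            exact (ha s hsj).1 k
          · intro t ht
            rcases hfin t ht with rfl | htj
            · rw [hval]
              constructor
              · intro hbe
                exact (ha s hsj).2 r₀ hr₀j |>.1 (hbe.trans hr₀b.symm)
              · intro k h
                refine (ha s hsj).2 r₀ hr₀j |>.2 k ?_
                rw [hr₀b]; exact h
            · rw [hvalne t htj]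
              exact (ha s hsj).2 t htj
      · -- genuinely new point: choose it by the extension property
        have helper1 : ∀ (k : Fin n) (r : Fin l), r.val < j →
            L.lt k (b (⟨j, hjl⟩ : Fin l)) (b r) →
            L.lt k (Alpha k (⟨j, hjl⟩ : Fin l)) (a r) := by
          intro k r hrj hlt
          have hsub : cutP L X k (b (⟨j, hjl⟩ : Fin l)) ⊆ cutP L X k (b r) :=
            cutP_mono L X hlt
          by_cases heq : cutP L X k (b (⟨j, hjl⟩ : Fin l)) = cutP L X k (b r)
          · rw [(hcomp k _ r heq).2]
            exact (ha r hrj).1 k |>.1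
          · have hns : ¬ cutP L X k (b r) ⊆ cutP L X k (b (⟨j, hjl⟩ : Fin l)) :=
              fun h => heq (Finset.Subset.antisymm hsub h)
            obtain ⟨x, hx1, hx2⟩ := Finset.not_subset.mp hns
            have h1 : L.lt k (Alpha k (⟨j, hjl⟩ : Fin l)) x :=
              (hα k _).2 x (cutP_subset L X hx1) hx2
            have h2 : L.lt k x (a r) :=
              L.trans _ _ _ _ ((hα k r).1 x hx1) ((ha r hrj).1 k |>.1)
            exact L.trans _ _ _ _ h1 h2
        have helper2 : ∀ (k : Fin n) (r : Fin l), r.val < j →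
            L.lt k (b r) (b (⟨j, hjl⟩ : Fin l)) →
            L.lt k (a r) (Beta k (⟨j, hjl⟩ : Fin l)) := by
          intro k r hrj hlt
          have hsub : cutP L X k (b r) ⊆ cutP L X k (b (⟨j, hjl⟩ : Fin l)) :=
            cutP_mono L X hlt
          by_cases heq : cutP L X k (b r) = cutP L X k (b (⟨j, hjl⟩ : Fin l))
          · rw [← (hcomp k r _ heq).1]
            exact (ha r hrj).1 k |>.2
          · have hns : ¬ cutP L X k (b (⟨j, hjl⟩ : Fin l)) ⊆ cutP L X k (b r) :=
              fun h => heq (Finset.Subset.antisymm hsub h)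
            obtain ⟨x, hx1, hx2⟩ := Finset.not_subset.mp hns
            have h1 : L.lt k (a r) x :=
              L.trans _ _ _ _ ((ha r hrj).1 k |>.2) ((hβ k r).2 x (cutP_subset L X hx1) hx2)
            have h2 : L.lt k x (Beta k (⟨j, hjl⟩ : Fin l)) := (hβ k _).1 x hx1
            exact L.trans _ _ _ _ h1 h2
        have hord : ∀ k : Fin n, ∀ u ∈ (insert (Alpha k (⟨j, hjl⟩ : Fin l))
                ((Finset.univ.filter (fun r : Fin l =>
                  r.val < j ∧ L.lt k (b r) (b (⟨j, hjl⟩ : Fin l)))).image a)),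
            ∀ v ∈ (insert (Beta k (⟨j, hjl⟩ : Fin l))
                ((Finset.univ.filter (fun r : Fin l =>
                  r.val < j ∧ L.lt k (b (⟨j, hjl⟩ : Fin l)) (b r))).image a)),
            L.lt k u v := by
          intro k u hu v hv
          rcases Finset.mem_insert.mp hu with rfl | hu'
          · rcases Finset.mem_insert.mp hv with rfl | hv'
            · exact hαβ k _
            · obtain ⟨r, hr, rfl⟩ := Finset.mem_image.mp hv'
              obtain ⟨-, hrj, hrlt⟩ := Finset.mem_filter.mp hr
              exact helper1 k r hrj hrlt
          · obtain ⟨r, hr, rfl⟩ := Finset.mem_image.mp hu'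
            obtain ⟨-, hrj, hrlt⟩ := Finset.mem_filter.mp hr
            rcases Finset.mem_insert.mp hv with rfl | hv'
            · exact helper2 k r hrj hrlt
            · obtain ⟨r', hr', rfl⟩ := Finset.mem_image.mp hv'
              obtain ⟨-, hrj', hrlt'⟩ := Finset.mem_filter.mp hr'
              exact (ha r hrj).2 r' hrj' |>.2 k (L.trans _ _ _ _ hrlt hrlt')
        obtain ⟨c, hcA, hc⟩ :=
          exists_sandwich L hL
            (Finset.univ.biUnion (fun k : Fin n =>
              (insert (Alpha k (⟨j, hjl⟩ : Fin l))
                ((Finset.univ.filter (fun r : Fin l =>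
                  r.val < j ∧ L.lt k (b r) (b (⟨j, hjl⟩ : Fin l)))).image a)) ∪
              (insert (Beta k (⟨j, hjl⟩ : Fin l))
                ((Finset.univ.filter (fun r : Fin l =>
                  r.val < j ∧ L.lt k (b (⟨j, hjl⟩ : Fin l)) (b r))).image a))))
            (fun k => insert (Alpha k (⟨j, hjl⟩ : Fin l))
                ((Finset.univ.filter (fun r : Fin l =>
                  r.val < j ∧ L.lt k (b r) (b (⟨j, hjl⟩ : Fin l)))).image a))
            (fun k => insert (Beta k (⟨j, hjl⟩ : Fin l))
                ((Finset.univ.filter (fun r : Fin l =>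
                  r.val < j ∧ L.lt k (b (⟨j, hjl⟩ : Fin l)) (b r))).image a))
            (fun k => fun u hu => Finset.mem_biUnion.mpr
              ⟨k, Finset.mem_univ k, Finset.mem_union_left _ hu⟩)
            (fun k => fun u hu => Finset.mem_biUnion.mpr
              ⟨k, Finset.mem_univ k, Finset.mem_union_right _ hu⟩)
            hord
        refine ⟨Function.update a (⟨j, hjl⟩ : Fin l) c, fun s hs => ?_⟩
        have hval : Function.update a (⟨j, hjl⟩ : Fin l) c (⟨j, hjl⟩ : Fin l) = c :=
          Function.update_self _ _ _
        have hvalne : ∀ t : Fin l, t.val < j →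
            Function.update a (⟨j, hjl⟩ : Fin l) c t = a t := by
          intro t htj
          refine Function.update_of_ne (fun h => ?_) _ _
          rw [h] at htj; simp at htj
        rcases hfin s hs with rfl | hsj
        · constructor
          · intro k
            rw [hval]
            exact ⟨(hc k).1 _ (Finset.mem_insert_self _ _),
                   (hc k).2 _ (Finset.mem_insert_self _ _)⟩
          · intro t ht
            rcases hfin t ht with rfl | htj
            · exact ⟨fun _ => rfl, fun k h => absurd h (L.irrefl _ _)⟩
            · rw [hval, hvalne t htj]
              constructor
              · intro hbe
                exact absurd ⟨t, htj, hbe.symm⟩ hdup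
              · intro k h
                refine (hc k).2 (a t) ?_
                refine Finset.mem_insert_of_mem (Finset.mem_image.mpr ⟨t, ?_, rfl⟩)
                exact Finset.mem_filter.mpr ⟨Finset.mem_univ t, htj, h⟩
        · rw [hvalne s hsj]
          constructor
          · intro k
            exact (ha s hsj).1 k
          · intro t ht
            rcases hfin t ht with rfl | htj
            · rw [hval]
              constructor
              · intro hbe
                exact absurd ⟨s, hsj, hbe⟩ hdup
              · intro k h
                refine (hc k).1 (a s) ?_
                refine Finset.mem_insert_of_mem (Finset.mem_image.mpr ⟨s, ?_, rfl⟩)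
                exact Finset.mem_filter.mpr ⟨Finset.mem_univ s, hsj, h⟩
            · rw [hvalne t htj]
              exact (ha s hsj).2 t htj

theorem mainA (hL : IsUniversalNLinear n M L)
    (hmono : ∀ (i : Fin n) (a c : M), L.lt i a c ↔ L.lt i (G a) (G c))
    (hdown : ∀ (a : M) (i : Fin n), L.lt i (G a) a)
    (hb : ∀ s, b s ∉ X) :
    ∃ a : Fin l → M,
      (∀ (k : Fin n) (s t : Fin l), L.lt k (a s) (a t) ↔ L.lt k (b s) (b t)) ∧
      (∀ (k : Fin n) (s : Fin l), ∀ x ∈ X,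
        (L.lt k (a s) x ↔ L.lt k (b s) x) ∧ (L.lt k x (a s) ↔ L.lt k x (b s))) ∧
      (∀ (k : Fin n) (s t : Fin l),
        L.lt k (a s) (G (a t)) → G (a t) ∉ X →
        ∃ x ∈ X, L.lt k (a s) x ∧ L.lt k x (G (a t))) := by
  have hrefs := fun k : Fin n => exists_refs L X G b hL hmono hdown hb k (X.card + 1)
  choose Beta Alpha hcomp hgood using hrefs
  have hgood' : ∀ (k : Fin n) (s : Fin l), Good L X G b k (Beta k) (Alpha k) (X.card + 1) s :=
    fun k s => hgood k s (Nat.lt_succ_of_le (Nat.sub_le _ _))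
  obtain ⟨a, ha⟩ := exists_pts L X b hL Beta Alpha hcomp
      (fun k s => (hgood' k s).1) (fun k s => (hgood' k s).2.1)
      (fun k s => (hgood' k s).2.2.1) l
  have hass : ∀ s : Fin l, s.val < l := fun s => s.isLt
  have hint : ∀ (k : Fin n) (s : Fin l), L.lt k (Alpha k s) (a s) ∧ L.lt k (a s) (Beta k s) :=
    fun k s => (ha s (hass s)).1 k
  have hagap : ∀ (k : Fin n) (s : Fin l), InGap L X k (cutP L X k (b s)) (a s) :=
    fun k s =>
      ⟨fun x hx => L.trans _ _ _ _ ((hgood' k s).2.1.1 x hx) (hint k s).1,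
       fun x hxX hxC => L.trans _ _ _ _ (hint k s).2 ((hgood' k s).1.2 x hxX hxC)⟩
  refine ⟨a, ?_, ?_, ?_⟩
  · -- the tuple realizes the same quantifier-free order type
    intro k s t
    constructor
    · intro h
      rcases L.total k (b s) (b t) with h' | h' | h'
      · exact h'
      · exfalso
        rw [(ha s (hass s)).2 t (hass t) |>.1 h'] at h
        exact L.irrefl _ _ h
      · exact absurd ((ha t (hass t)).2 s (hass s) |>.2 k h') (nasymm L h)
    · intro h
      exact (ha s (hass s)).2 t (hass t) |>.2 k h
  · -- same type over X
    intro k s x hx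
    constructor
    · constructor
      · intro h
        have hxc : x ∉ cutP L X k (b s) := fun hc => nasymm L h ((hagap k s).1 x hc)
        refine nlt_of L (fun he => hb s (he ▸ hx)) (fun h' => hxc ?_)
        exact (mem_cutP L X).mpr ⟨hx, h'⟩
      · intro h
        have hxc : x ∉ cutP L X k (b s) := fun hc => nasymm L h ((mem_cutP L X).mp hc).2
        exact (hagap k s).2 x hx hxc
    · constructor
      · intro h
        have hxc : x ∈ cutP L X k (b s) := by
          by_contra hc
          exact nasymm L h ((hagap k s).2 x hx hc)
        exact ((mem_cutP L X).mp hxc).2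
      · intro h
        exact (hagap k s).1 x ((mem_cutP L X).mpr ⟨hx, h⟩)
  · -- the independence condition
    intro k s t hyp _
    have hGat1 : L.lt k (G (Alpha k t)) (G (a t)) := (hmono k _ _).mp (hint k t).1
    have hGat2 : L.lt k (G (a t)) (G (Beta k t)) := (hmono k _ _).mp (hint k t).2
    by_cases heq : cutP L X k (b s) = cutP L X k (G (Beta k t))
    · -- same gap: contradiction with the choice of the reference points
      exfalso
      have hR3 := (hgood' k t).2.2.2.2.2.2 s (Nat.lt_succ_of_le (Nat.sub_le _ _)) heq.symm
      have : L.lt k (G (a t)) (a s) :=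
        L.trans _ _ _ _ hGat2 (L.trans _ _ _ _ hR3 (hint k s).1)
      exact nasymm L hyp this
    · rcases cutP_comparable L X k (b s) (G (Beta k t)) with hsub | hsub
      · -- strictly lower gap: there is a separating element of X
        have hns : ¬ cutP L X k (G (Beta k t)) ⊆ cutP L X k (b s) :=
          fun h => heq (Finset.Subset.antisymm hsub h)
        obtain ⟨x, hx1, hx2⟩ := Finset.not_subset.mp hns
        refine ⟨x, cutP_subset L X hx1, ?_, ?_⟩
        · exact (hagap k s).2 x (cutP_subset L X hx1) hx2
        · have hx3 : x ∈ cutP L X k (G (Alpha k t)) := by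
            rw [(hgood' k t).2.2.2.2.2.1]; exact hx1
          exact L.trans _ _ _ _ ((mem_cutP L X).mp hx3).2 hGat1
      · -- strictly higher gap: contradiction
        exfalso
        have hns : ¬ cutP L X k (b s) ⊆ cutP L X k (G (Beta k t)) :=
          fun h => heq (Finset.Subset.antisymm h hsub)
        obtain ⟨x, hx1, hx2⟩ := Finset.not_subset.mp hns
        have hxas : L.lt k x (a s) := (hagap k s).1 x hx1
        have hGβx : L.lt k (G (Beta k t)) x := by
          refine nlt_of L (fun he => ?_) (fun h' => hx2 ?_)
          · exact (hgood' k t).2.2.2.2.1 (he ▸ (cutP_subset L X hx1))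
          · exact (mem_cutP L X).mpr ⟨cutP_subset L X hx1, h'⟩
        have : L.lt k (G (a t)) (a s) :=
          L.trans _ _ _ _ hGat2 (L.trans _ _ _ _ hGβx hxas)
        exact nasymm L hyp this

end Build

end Stmt3

/-- In a universal `n`-linear order:
(a) if `g a <_i a` for all `a` and `i`, then `g` moves almost `R`-maximally;
(b) if `a <_i g a` for all `a` and `i`, then `g` moves almost `L`-maximally. -/
theorem stmt3 {n : ℕ} {M : Type*} (L : NLinear n M) (hL : IsUniversalNLinear n M L)
    (g : L.aut) :
    ((∀ (a : M) (i : Fin n), L.lt i ((g : Equiv.Perm M) a) a) →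
      ∀ (X : Finset M) (l : ℕ) (b : Fin l → M), (∀ s, b s ∉ X) →
        ∃ a : Fin l → M,
          (∀ (k : Fin n) (s t : Fin l), L.lt k (a s) (a t) ↔ L.lt k (b s) (b t)) ∧
          (∀ (k : Fin n) (s : Fin l), ∀ x ∈ X,
            (L.lt k (a s) x ↔ L.lt k (b s) x) ∧ (L.lt k x (a s) ↔ L.lt k x (b s))) ∧
          (∀ (k : Fin n) (s t : Fin l),
            L.lt k (a s) ((g : Equiv.Perm M) (a t)) → (g : Equiv.Perm M) (a t) ∉ X →
            ∃ x ∈ X, L.lt k (a s) x ∧ L.lt k x ((g : Equiv.Perm M) (a t)))) ∧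
    ((∀ (a : M) (i : Fin n), L.lt i a ((g : Equiv.Perm M) a)) →
      ∀ (X : Finset M) (l : ℕ) (b : Fin l → M), (∀ s, b s ∉ X) →
        ∃ a : Fin l → M,
          (∀ (k : Fin n) (s t : Fin l), L.lt k (a s) (a t) ↔ L.lt k (b s) (b t)) ∧
          (∀ (k : Fin n) (s : Fin l), ∀ x ∈ X,
            (L.lt k (a s) x ↔ L.lt k (b s) x) ∧ (L.lt k x (a s) ↔ L.lt k x (b s))) ∧
          (∀ (k : Fin n) (s t : Fin l),
            L.lt k ((g : Equiv.Perm M) (a s)) (a t) → (g : Equiv.Perm M) (a s) ∉ X →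
            ∃ x ∈ X, L.lt k ((g : Equiv.Perm M) (a s)) x ∧ L.lt k x (a t))) := by
  constructor
  · intro hdown X l b hb
    exact Stmt3.mainA L X (g : Equiv.Perm M) b hL g.2 hdown hb
  · intro hup X l b hb
    set L' : NLinear n M :=
      { lt := fun i x y => L.lt i y x
        irrefl := fun i a h => L.irrefl i a h
        trans := fun i a b c h1 h2 => L.trans i c b a h2 h1
        total := fun i a b => by
          rcases L.total i a b with h | h | h
          · exact Or.inr (Or.inr h)
          · exact Or.inr (Or.inl h)
          · exact Or.inl h } with hL'def
    have hL' : IsUniversalNLinear n M L' := by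
      refine ⟨hL.countable, hL.infinite, ?_⟩
      intro A D hsub hdc
      have hdc' : ∀ i, ∀ a ∈ A, ∀ c ∈ A, L.lt i a c →
          c ∈ (↑A : Set M) \ D i → a ∈ (↑A : Set M) \ D i := by
        intro i a ha c hc hlt hcD
        refine ⟨ha, fun hD => ?_⟩
        exact hcD.2 (hdc i c hc a ha hlt hD)
      obtain ⟨x, hxA, hx⟩ := hL.extension A (fun i => (↑A : Set M) \ D i)
        (fun i => Set.diff_subset) hdc'
      refine ⟨x, hxA, fun i a ha => ?_⟩
      constructor
      · intro h
        by_contra hD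
        have h2 : L.lt i a x := (hx i a ha).mpr ⟨ha, hD⟩
        exact Stmt3.nasymm L h2 h
      · intro hD
        have h1 : ¬ L.lt i a x := fun h => ((hx i a ha).mp h).2 hD
        have h2 : a ≠ x := fun h => hxA (h ▸ ha)
        exact Stmt3.nlt_of L h2 h1
    have hmono' : ∀ (i : Fin n) (a c : M),
        L'.lt i a c ↔ L'.lt i ((g : Equiv.Perm M) a) ((g : Equiv.Perm M) c) :=
      fun i a c => g.2 i c a
    have hdown' : ∀ (a : M) (i : Fin n), L'.lt i ((g : Equiv.Perm M) a) a :=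
      fun a i => hup a i
    obtain ⟨a, h1, h2, h3⟩ := Stmt3.mainA L' X (g : Equiv.Perm M) b hL' hmono' hdown' hb
    refine ⟨a, ?_, ?_, ?_⟩
    · intro k s t
      exact h1 k t s
    · intro k s x hx
      exact ⟨(h2 k s x hx).2, (h2 k s x hx).1⟩
    · intro k s t hlt hnot
      obtain ⟨x, hxX, hx1, hx2⟩ := h3 k t s hlt hnot
      exact ⟨x, hxX, hx2, hx1⟩
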